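/- arXiv:math/9411206 — 6 statements merged into one kernel-verified Lean document; each statement's English description precedes it below -/
import Mathlib

section
/- If F : ℝ² → ℝ is such that F(·, y) is of Baire class 1 for every y ∈ ℝ, and the family {F(x, ·) : x ∈ ℝ} is uniformly equicontinuous (e.g., uniformly Lipschitz with a common constant), then F is of Baire class 1 as a function of two variables. -/
open MeasureTheory Filter Set Topology
/-- Baire class `n` functions: class 0 = continuous, class `n+1` = pointwise
limits of sequences of class-`n` functions. -/
def BaireClass {X Y : Type*} [TopologicalSpace X] [TopologicalSpace Y] :
    ℕ → (X → Y) → Prop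
  | 0, f => Continuous f
  | (n + 1), f => ∃ g : ℕ → X → Y, (∀ k, BaireClass n (g k)) ∧
      ∀ x, Filter.Tendsto (fun k => g k x) Filter.atTop (nhds (f x))


/-- Linear interpolation of a ℤ-indexed family at integer grid points in the
second variable. -/
noncomputable def interp (g : ℤ → ℝ → ℝ) (p : ℝ × ℝ) : ℝ :=
  (1 - Int.fract p.2) * g ⌊p.2⌋ p.1 + Int.fract p.2 * g (⌊p.2⌋ + 1) p.1

lemma interp_continuous (g : ℤ → ℝ → ℝ) (hg : ∀ j, Continuous (g j)) :
    Continuous (interp g) := by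
  have hcover : ⋃ j : ℤ, {p : ℝ × ℝ | (j : ℝ) ≤ p.2 ∧ p.2 ≤ j + 1} = univ := by
    ext p
    simp only [mem_iUnion, mem_setOf_eq, mem_univ, iff_true]
    exact ⟨⌊p.2⌋, Int.floor_le _, by push_cast; exact (Int.lt_floor_add_one _).le⟩
  have hclosed : ∀ j : ℤ, IsClosed {p : ℝ × ℝ | (j : ℝ) ≤ p.2 ∧ p.2 ≤ j + 1} := by
    intro j
    exact (isClosed_le continuous_const continuous_snd).inter
      (isClosed_le continuous_snd continuous_const)
  have hlf : LocallyFinite fun j : ℤ => {p : ℝ × ℝ | (j : ℝ) ≤ p.2 ∧ p.2 ≤ j + 1} := by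
    intro p
    refine ⟨{q : ℝ × ℝ | |q.2 - p.2| < 1}, ?_, ?_⟩
    · have : Continuous fun q : ℝ × ℝ => |q.2 - p.2| := by continuity
      exact (this.isOpen_preimage (Iio 1) isOpen_Iio).mem_nhds (by simp)
    · apply Set.Finite.subset (Set.finite_Icc (⌈p.2⌉ - 2) (⌊p.2⌋ + 1))
      rintro j ⟨q, ⟨hj1, hj2⟩, hq⟩
      simp only [mem_setOf_eq] at hq
      have h1 : p.2 - 1 < q.2 := by cases abs_lt.mp hq; linarith
      have h2 : q.2 < p.2 + 1 := by cases abs_lt.mp hq; linarith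
      constructor
      · have h3 := Int.ceil_le.mpr (by push_cast; linarith : p.2 ≤ ((j + 2 : ℤ) : ℝ))
        omega
      · have h4 := Int.le_floor.mpr (by push_cast; linarith : ((j - 1 : ℤ) : ℝ) ≤ p.2)
        omega
  refine hlf.continuous hcover hclosed fun j => ?_
  have hA : Continuous fun p : ℝ × ℝ =>
      (1 - (p.2 - j)) * g j p.1 + (p.2 - j) * g (j + 1) p.1 := by
    apply Continuous.add
    · exact (continuous_const.sub (continuous_snd.sub continuous_const)).mul
        ((hg j).comp continuous_fst)
    · exact (continuous_snd.sub continuous_const).mul ((hg (j + 1)).comp continuous_fst)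
  refine hA.continuousOn.congr fun p hp => ?_
  obtain ⟨hp1, hp2⟩ := hp
  rcases eq_or_lt_of_le hp2 with h | h
  · -- p.2 = j + 1
    have hp2 : p.2 = ((j + 1 : ℤ) : ℝ) := by push_cast; linarith
    have hfloor : ⌊p.2⌋ = j + 1 := by rw [hp2, Int.floor_intCast]
    have hfract : Int.fract p.2 = 0 := by rw [hp2, Int.fract_intCast]
    simp only [interp, hfloor, hfract]
    rw [h]; push_cast; ring
  · have hfloor : ⌊p.2⌋ = j := Int.floor_eq_iff.mpr ⟨hp1, by push_cast; exact h⟩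
    have hfract : Int.fract p.2 = p.2 - j := by rw [Int.fract, hfloor]
    simp only [interp, hfloor, hfract]


lemma baireOne_of_unif {α : Type*} [TopologicalSpace α] (F : α → ℝ) (G : ℕ → α → ℝ)
    (H : ℕ → ℕ → α → ℝ) (Hcont : ∀ n m, Continuous (H n m))
    (Hlim : ∀ n p, Tendsto (fun m => H n m p) atTop (nhds (G n p)))
    (hb : ∀ n p, |G n p - F p| ≤ (1/2 : ℝ) ^ n) : BaireClass 1 F := by
  set b : ℕ → ℝ := fun n => 2 * (1/2 : ℝ) ^ n with hbdef
  have hbpos : ∀ n, 0 ≤ b n := fun n => by positivity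
  set q : ℕ → α → ℝ := fun n p => G (n + 1) p - G n p with hq
  have hqb : ∀ n p, |q n p| ≤ b n := by
    intro n p
    have h1 := hb (n + 1) p
    have h2 := hb n p
    have : q n p = (G (n+1) p - F p) - (G n p - F p) := by simp only [hq]; ring
    rw [this]
    calc |(G (n+1) p - F p) - (G n p - F p)| ≤ |G (n+1) p - F p| + |G n p - F p| :=
          abs_sub _ _
      _ ≤ (1/2:ℝ)^(n+1) + (1/2:ℝ)^n := add_le_add h1 h2
      _ ≤ b n := by rw [hbdef]; simp only [pow_succ]; nlinarith [pow_nonneg (by norm_num : (0:ℝ) ≤ 1/2) n]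
  set c : ℕ → ℕ → α → ℝ :=
    fun n m p => max (-(b n)) (min (b n) (H (n+1) m p - H n m p)) with hc
  have hccont : ∀ n m, Continuous (c n m) := by
    intro n m
    exact continuous_const.max (continuous_const.min ((Hcont (n+1) m).sub (Hcont n m)))
  have hclim : ∀ n p, Tendsto (fun m => c n m p) atTop (nhds (q n p)) := by
    intro n p
    have h0 : Tendsto (fun m => H (n+1) m p - H n m p) atTop (nhds (q n p)) :=
      (Hlim (n+1) p).sub (Hlim n p)
    have h1 : Tendsto (fun m => c n m p) atTop
        (nhds (max (-(b n)) (min (b n) (q n p)))) :=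
      tendsto_const_nhds.max (tendsto_const_nhds.min h0)
    have habs := abs_le.mp (hqb n p)
    rwa [min_eq_right habs.2, max_eq_right habs.1] at h1
  have hcb : ∀ n m p, |c n m p| ≤ b n := by
    intro n m p
    rw [abs_le]
    exact ⟨le_max_left _ _, max_le (by linarith [hbpos n]) (min_le_left _ _)⟩
  have hcq : ∀ n m p, |c n m p - q n p| ≤ 2 * b n := by
    intro n m p
    calc |c n m p - q n p| ≤ |c n m p| + |q n p| := abs_sub _ _
      _ ≤ b n + b n := add_le_add (hcb n m p) (hqb n p)
      _ = 2 * b n := by ring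
  refine ⟨fun m p => H 0 m p + ∑ n ∈ Finset.range m, c n m p, fun m => ?_, fun p => ?_⟩
  · show Continuous _
    exact (Hcont 0 m).add (continuous_finset_sum _ fun n _ => hccont n m)
  · rw [Metric.tendsto_atTop]
    intro ε hε
    -- choose N₀ with (1/2)^N₀ small
    obtain ⟨N₀, hN₀⟩ : ∃ N₀ : ℕ, (1/2 : ℝ) ^ N₀ < ε / 24 := by
      obtain ⟨N₀, hN₀⟩ := exists_pow_lt_of_lt_one (by positivity : (0:ℝ) < ε / 24)
        (by norm_num : (1/2 : ℝ) < 1)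
      exact ⟨N₀, hN₀⟩
    -- finite part tends to 0
    have hfin : Tendsto (fun m => |H 0 m p - G 0 p| +
        ∑ n ∈ Finset.range N₀, |c n m p - q n p|) atTop (nhds 0) := by
      have t1 : Tendsto (fun m => |H 0 m p - G 0 p|) atTop (nhds 0) := by
        have := (Hlim 0 p).sub (tendsto_const_nhds (x := G 0 p))
        simpa using (this.abs.congr' (by simp)) |>.mono_left le_rfl
      have t2 : Tendsto (fun m => ∑ n ∈ Finset.range N₀, |c n m p - q n p|) atTop (nhds 0) := by
        have : Tendsto (fun m => ∑ n ∈ Finset.range N₀, |c n m p - q n p|) atTop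
            (nhds (∑ n ∈ Finset.range N₀, (0:ℝ))) := by
          apply tendsto_finset_sum
          intro n _
          have := ((hclim n p).sub (tendsto_const_nhds (x := q n p))).abs
          simpa using this
        simpa using this
      simpa using t1.add t2
    have hev : ∀ᶠ m in atTop, |H 0 m p - G 0 p| +
        ∑ n ∈ Finset.range N₀, |c n m p - q n p| < ε / 3 :=
      hfin.eventually (eventually_lt_nhds (by positivity : (0:ℝ) < ε/3))
    obtain ⟨N₂, hN₂⟩ := eventually_atTop.mp hev
    refine ⟨max N₀ N₂, fun m hm => ?_⟩
    have hmN₀ : N₀ ≤ m := le_trans (le_max_left _ _) hm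
    have hmN₂ : N₂ ≤ m := le_trans (le_max_right _ _) hm
    rw [Real.dist_eq]
    have hG : G m p = G 0 p + ∑ n ∈ Finset.range m, q n p := by
      rw [Finset.sum_range_sub (fun n => G n p)]; ring
    have hsplit : (H 0 m p + ∑ n ∈ Finset.range m, c n m p) - F p =
        (H 0 m p - G 0 p) + (∑ n ∈ Finset.range m, (c n m p - q n p)) + (G m p - F p) := by
      rw [hG, Finset.sum_sub_distrib]; ring
    have hBsplit : ∑ n ∈ Finset.range m, |c n m p - q n p| =
        ∑ n ∈ Finset.range N₀, |c n m p - q n p| +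
        ∑ n ∈ Finset.Ico N₀ m, |c n m p - q n p| := by
      rw [Finset.range_eq_Ico, Finset.range_eq_Ico]
      exact (Finset.sum_Ico_consecutive (fun n => |c n m p - q n p|) (Nat.zero_le N₀) hmN₀).symm
    have htail : ∑ n ∈ Finset.Ico N₀ m, |c n m p - q n p| ≤ 8 * (1/2:ℝ) ^ N₀ := by
      calc ∑ n ∈ Finset.Ico N₀ m, |c n m p - q n p|
          ≤ ∑ n ∈ Finset.Ico N₀ m, 4 * (1/2:ℝ) ^ n := by
            apply Finset.sum_le_sum
            intro n _
            have := hcq n m p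
            rw [hbdef] at this
            linarith
        _ = 4 * ∑ n ∈ Finset.Ico N₀ m, (1/2:ℝ) ^ n := by rw [Finset.mul_sum]
        _ ≤ 8 * (1/2:ℝ) ^ N₀ := by
            have : ∑ n ∈ Finset.Ico N₀ m, (1/2:ℝ) ^ n ≤ 2 * (1/2:ℝ) ^ N₀ := by
              rw [Finset.sum_Ico_eq_sum_range]
              have : ∑ k ∈ Finset.range (m - N₀), (1/2:ℝ) ^ (N₀ + k) =
                  (1/2:ℝ) ^ N₀ * ∑ k ∈ Finset.range (m - N₀), (1/2:ℝ) ^ k := by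
                rw [Finset.mul_sum]
                congr 1
                ext k
                rw [pow_add]
              rw [this]
              have h2 := sum_geometric_two_le (m - N₀)
              have hpow : (0:ℝ) ≤ (1/2:ℝ) ^ N₀ := by positivity
              nlinarith
            linarith
    have hC : |G m p - F p| ≤ (1/2:ℝ) ^ N₀ := by
      calc |G m p - F p| ≤ (1/2:ℝ) ^ m := hb m p
        _ ≤ (1/2:ℝ) ^ N₀ := pow_le_pow_of_le_one (by norm_num) (by norm_num) hmN₀
    have hA := hN₂ m hmN₂
    calc |(H 0 m p + ∑ n ∈ Finset.range m, c n m p) - F p|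
        ≤ |H 0 m p - G 0 p| + |∑ n ∈ Finset.range m, (c n m p - q n p)| + |G m p - F p| := by
          rw [hsplit]
          exact (abs_add_le _ _).trans (add_le_add_left (abs_add_le _ _) _)
      _ ≤ |H 0 m p - G 0 p| + ∑ n ∈ Finset.range m, |c n m p - q n p| + |G m p - F p| := by
          gcongr
          exact Finset.abs_sum_le_sum_abs _ _
      _ < ε := by
          rw [hBsplit]
          have h24 : (1/2:ℝ) ^ N₀ < ε / 24 := hN₀
          linarith

/-- If every horizontal section of `F` is Baire class 1 and the family of
vertical sections is uniformly equicontinuous, then `F` is Baire class 1. -/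
theorem baireOne_of_sections (F : ℝ × ℝ → ℝ)
    (h1 : ∀ y : ℝ, BaireClass 1 (fun x => F (x, y)))
    (h2 : UniformEquicontinuous (fun x y => F (x, y))) :
    BaireClass 1 F := by
  -- extract approximating sequences for the horizontal sections
  have h1' : ∀ y : ℝ, ∃ g : ℕ → ℝ → ℝ, (∀ k, Continuous (g k)) ∧
      ∀ x, Tendsto (fun k => g k x) atTop (nhds (F (x, y))) := by
    intro y
    obtain ⟨g, hg, hlim⟩ := h1 y
    exact ⟨g, fun k => hg k, hlim⟩
  choose g hgcont hglim using h1'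
  -- extract moduli of equicontinuity
  have h2' := Metric.uniformEquicontinuous_iff.mp h2
  have hδ : ∀ n : ℕ, ∃ δ > 0, ∀ y y' : ℝ, dist y y' < δ →
      ∀ x : ℝ, dist (F (x, y)) (F (x, y')) < (1/2 : ℝ) ^ n := by
    intro n
    exact h2' ((1/2 : ℝ) ^ n) (by positivity)
  choose δ hδpos hδprop using hδ
  set r : ℕ → ℝ := fun n => δ n / 2 with hrdef
  have hrpos : ∀ n, 0 < r n := fun n => by have := hδpos n; simp [hrdef]; linarith
  set G : ℕ → ℝ × ℝ → ℝ := fun n p =>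
    interp (fun j x => F (x, (j : ℝ) * r n)) (p.1, p.2 / r n) with hGdef
  set H : ℕ → ℕ → ℝ × ℝ → ℝ := fun n m p =>
    interp (fun j x => g ((j : ℝ) * r n) m x) (p.1, p.2 / r n) with hHdef
  apply baireOne_of_unif F G H
  · intro n m
    exact (interp_continuous _ fun j => hgcont _ m).comp
      (continuous_fst.prodMk (continuous_snd.div_const _))
  · intro n p
    simp only [hHdef, hGdef, interp]
    exact ((tendsto_const_nhds.mul (hglim _ p.1)).add
      (tendsto_const_nhds.mul (hglim _ p.1)))
  · intro n p
    set y := p.2 / r n with hy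
    set j : ℤ := ⌊y⌋ with hj
    set t : ℝ := Int.fract y with htdef
    have ht0 : 0 ≤ t := Int.fract_nonneg y
    have ht1 : t < 1 := Int.fract_lt_one y
    have hr := hrpos n
    have key : r n * t = p.2 - (j : ℝ) * r n := by
      rw [htdef, Int.fract, hy, hj, hy]
      field_simp
    have grid1 : dist ((j : ℝ) * r n) p.2 < δ n := by
      rw [Real.dist_eq, abs_sub_comm, abs_of_nonneg (by nlinarith : (0:ℝ) ≤ p.2 - (j:ℝ) * r n)]
      have h1 : p.2 - (j:ℝ) * r n = r n * t := key.symm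
      have h2 : r n * t ≤ r n := by nlinarith
      have h3 := hδpos n
      simp only [hrdef] at h1 h2 ⊢
      linarith
    have grid2 : dist (((j + 1 : ℤ) : ℝ) * r n) p.2 < δ n := by
      have hcast : ((j + 1 : ℤ) : ℝ) * r n = (j : ℝ) * r n + r n := by push_cast; ring
      rw [Real.dist_eq, hcast]
      have h1 : (j:ℝ) * r n + r n - p.2 = r n * (1 - t) := by linarith [key]
      rw [abs_of_nonneg (by nlinarith)]
      have h2 : r n * (1 - t) ≤ r n := by nlinarith
      have h3 := hδpos n
      simp only [hrdef] at h1 h2 ⊢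
      linarith
    set A := F (p.1, (j : ℝ) * r n) with hA'
    set B := F (p.1, ((j + 1 : ℤ) : ℝ) * r n) with hB'
    have hA : |A - F p| ≤ (1/2 : ℝ) ^ n := by
      have h := hδprop n _ p.2 grid1 p.1
      rw [Real.dist_eq] at h
      simp only [Prod.mk.eta] at h
      exact le_of_lt h
    have hB : |B - F p| ≤ (1/2 : ℝ) ^ n := by
      have h := hδprop n _ p.2 grid2 p.1
      rw [Real.dist_eq] at h
      simp only [Prod.mk.eta] at h
      exact le_of_lt h
    have hGeq : G n p = (1 - t) * A + t * B := rfl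
    rw [hGeq]
    have expand : (1 - t) * A + t * B - F p = (1 - t) * (A - F p) + t * (B - F p) := by ring
    rw [expand]
    calc |(1 - t) * (A - F p) + t * (B - F p)|
        ≤ |(1 - t) * (A - F p)| + |t * (B - F p)| := abs_add_le _ _
      _ = (1 - t) * |A - F p| + t * |B - F p| := by
          rw [abs_mul, abs_mul, abs_of_nonneg (by linarith : (0:ℝ) ≤ 1 - t),
            abs_of_nonneg ht0]
      _ ≤ (1 - t) * (1/2 : ℝ) ^ n + t * (1/2 : ℝ) ^ n :=
          add_le_add (mul_le_mul_of_nonneg_left hA (by linarith))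
            (mul_le_mul_of_nonneg_left hB ht0)
      _ = (1/2 : ℝ) ^ n := by ring
end

section
/- Let (X, Σ, μ) be a probability space in which every subset of X is measurable, let α < ω₁, and let f : X × ℝ → ℝ be bounded such that for every x ∈ X the function y ↦ f(x,y) is of Baire class α. Then the function F(y) = ∫ₓ f(x,y) dμ(x) is of Baire class α. -/
open MeasureTheory Filter Set Topology

/-- Baire class `α` for an ordinal `α`: class `0` is the continuous functions,
and a function is of class `α` if it is the pointwise limit of a sequence of
functions of classes `βₙ < α`. -/
inductive BaireClassOrd {X : Type} [TopologicalSpace X] :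
    Ordinal.{0} → (X → ℝ) → Prop
  | zero (f : X → ℝ) : Continuous f → BaireClassOrd 0 f
  | lim (α : Ordinal.{0}) (f : X → ℝ) (β : ℕ → Ordinal.{0}) (g : ℕ → X → ℝ) :
      (∀ n, β n < α) → (∀ n, BaireClassOrd (β n) (g n)) →
      (∀ x, Tendsto (fun n => g n x) atTop (nhds (f x))) → BaireClassOrd α f

namespace BaireAux

lemma mono {X : Type} [TopologicalSpace X] {β α : Ordinal.{0}} {f : X → ℝ}
    (h : BaireClassOrd β f) (hle : β ≤ α) : BaireClassOrd α f := by
  rcases eq_or_lt_of_le hle with rfl | hlt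
  · exact h
  · exact .lim α f (fun _ => β) (fun _ => f) (fun _ => hlt) (fun _ => h)
      (fun x => tendsto_const_nhds)

lemma comp_left {X : Type} [TopologicalSpace X] {α : Ordinal.{0}} {f : X → ℝ}
    (φ : ℝ → ℝ) (hφ : Continuous φ) (h : BaireClassOrd α f) :
    BaireClassOrd α (fun x => φ (f x)) := by
  induction h with
  | zero f hf => exact .zero _ (hφ.comp hf)
  | lim α f β g hβ hg hlim ih =>
      exact .lim α _ β (fun n x => φ (g n x)) hβ ih
        (fun x => ((hφ.tendsto _).comp (hlim x)))

lemma continuous_of_zero {X : Type} [TopologicalSpace X] {f : X → ℝ}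
    (h : BaireClassOrd 0 f) : Continuous f := by
  cases h with
  | zero _ hf => exact hf
  | lim _ _ β g hβ => exact absurd (hβ 0) (not_lt_of_ge zero_le)

lemma exists_seq {X : Type} [TopologicalSpace X] {α : Ordinal.{0}} {F : X → ℝ}
    (h : BaireClassOrd α F) (hα : α ≠ 0) :
    ∃ (β : ℕ → Ordinal.{0}) (g : ℕ → X → ℝ), (∀ n, β n < α) ∧
      (∀ n, BaireClassOrd (β n) (g n)) ∧
      ∀ x, Tendsto (fun n => g n x) atTop (nhds (F x)) := by
  cases h with
  | zero _ _ => exact absurd rfl hα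
  | lim _ _ β g hβ hg hlim => exact ⟨β, g, hβ, hg, hlim⟩

lemma integrable_of_bounded {X : Type} [MeasurableSpace X]
    (hall : ∀ s : Set X, MeasurableSet s)
    (μ : Measure X) [IsFiniteMeasure μ] (u : X → ℝ) (M : ℝ)
    (hu : ∀ x, |u x| ≤ M) : Integrable u μ := by
  have hm : AEStronglyMeasurable u μ :=
    (Measurable.stronglyMeasurable (fun s _ => hall _)).aestronglyMeasurable
  exact (integrable_const M).mono' hm (Eventually.of_forall fun x => by
    simpa [Real.norm_eq_abs] using hu x)

lemma main {X : Type} [MeasurableSpace X]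
    (hall : ∀ s : Set X, MeasurableSet s) :
    ∀ α : Ordinal.{0}, α < (Cardinal.aleph 1).ord →
      ∀ (μ : Measure X), IsFiniteMeasure μ →
      ∀ (f : X → ℝ → ℝ) (M : ℝ), (∀ x y, |f x y| ≤ M) →
      (∀ x, BaireClassOrd α (f x)) →
      BaireClassOrd α (fun y => ∫ x, f x y ∂μ) := by
  intro α
  induction α using Ordinal.induction with
  | h α IH =>
  intro hα μ hfin f M hbd hf
  classical
  have hmeas : ∀ (u : X → ℝ), AEStronglyMeasurable u μ := fun u =>
    (Measurable.stronglyMeasurable (fun s _ => hall _)).aestronglyMeasurable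
  rcases eq_or_ne α 0 with rfl | hα0
  · -- continuous case
    refine .zero _ ?_
    refine continuous_of_dominated (bound := fun _ => M)
      (fun y => hmeas _) (fun y => Eventually.of_forall fun x => ?_)
      (integrable_const M) (Eventually.of_forall fun x =>
        continuous_of_zero (hf x))
    simpa [Real.norm_eq_abs] using (hbd x y)
  · -- limit case
    rcases isEmpty_or_nonempty X with hX | hX
    · have : (fun y => ∫ x, f x y ∂μ) = fun _ => (0 : ℝ) := by
        funext y; exact integral_of_isEmpty
      rw [this]
      exact mono (.zero _ continuous_const) (zero_le (a := α))
    have hM : 0 ≤ M := (abs_nonneg _).trans (hbd hX.some 0)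
    -- extract sequences and truncate
    choose β g0 hβ hg0 hlim0 using fun x => exists_seq (hf x) hα0
    set T : ℝ → ℝ := fun t => max (-M) (min M t) with hT
    have hTc : Continuous T := continuous_const.max (continuous_const.min continuous_id)
    have hTbd : ∀ t, |T t| ≤ M := by
      intro t
      rw [abs_le]
      constructor
      · exact le_max_left _ _
      · exact max_le (neg_le_self hM) (min_le_left _ _)
    have hTfix : ∀ t, |t| ≤ M → T t = t := by
      intro t ht
      rw [abs_le] at ht
      rw [hT]; simp only [min_eq_right ht.2, max_eq_right ht.1]
    set g : X → ℕ → ℝ → ℝ := fun x n y => T (g0 x n y) with hg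
    have hgclass : ∀ x n, BaireClassOrd (β x n) (g x n) :=
      fun x n => comp_left T hTc (hg0 x n)
    have hgbd : ∀ x n y, |g x n y| ≤ M := fun x n y => hTbd _
    have hglim : ∀ x y, Tendsto (fun n => g x n y) atTop (nhds (f x y)) := by
      intro x y
      have := (hTc.tendsto (f x y)).comp (hlim0 x y)
      rwa [hTfix _ (hbd x y)] at this
    -- enumeration of ordinals below α
    have hcard : α.card ≤ Cardinal.aleph0 := by
      have := Cardinal.lt_ord.mp hα
      rwa [← Cardinal.succ_aleph0, Order.lt_succ_iff] at this
    have hcount : Countable ↥(Set.Iio α) := by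
      rw [← Cardinal.mk_le_aleph0_iff, Ordinal.mk_Iio_ordinal]
      exact Cardinal.lift_le_aleph0.mpr hcard
    have hne : Nonempty ↥(Set.Iio α) :=
      ⟨⟨0, pos_iff_ne_zero.mpr hα0⟩⟩
    obtain ⟨γ0, hγ0⟩ := exists_surjective_nat ↥(Set.Iio α)
    set γ : ℕ → Ordinal.{0} := fun n => (γ0 n : Ordinal) with hγdef
    have hγlt : ∀ n, γ n < α := fun n => (γ0 n).2
    have hγsur : ∀ b < α, ∃ n, γ n = b := by
      intro b hb
      obtain ⟨n, hn⟩ := hγ0 ⟨b, hb⟩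
      exact ⟨n, congrArg Subtype.val hn⟩
    -- cumulative maxima
    set δ : ℕ → Ordinal.{0} := fun k => Nat.rec (γ 0) (fun k ih => max ih (γ (k + 1))) k
      with hδdef
    have hδlt : ∀ k, δ k < α := by
      intro k
      induction k with
      | zero => exact hγlt 0
      | succ k ihk => exact max_lt ihk (hγlt (k + 1))
    have hδmono : Monotone δ := by
      apply monotone_nat_of_le_succ
      intro k
      exact le_max_left _ _
    have hγδ : ∀ j, γ j ≤ δ j := by
      intro j
      cases j with
      | zero => exact le_rfl
      | succ j => exact le_max_right _ _
    have hδcof : ∀ b < α, ∃ k, b ≤ δ k := by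
      intro b hb
      obtain ⟨j, hj⟩ := hγsur b hb
      exact ⟨j, hj ▸ hγδ j⟩
    -- sets where the n-th approximant has class ≤ δ k
    set B : ℕ → ℕ → Set X := fun n k => {x | BaireClassOrd (δ k) (g x n)} with hB
    have hBmono : ∀ n, Monotone (B n) := by
      intro n k l hkl x hx
      exact mono hx (hδmono hkl)
    have hBunion : ∀ n, (⋃ k, B n k) = Set.univ := by
      intro n
      ext x
      simp only [Set.mem_iUnion, Set.mem_univ, iff_true]
      obtain ⟨k, hk⟩ := hδcof (β x n) (hβ x n)
      exact ⟨k, mono (hgclass x n) hk⟩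
    -- choose k n with small complement measure
    have hμtend : ∀ n, Tendsto (fun k => μ (B n k)ᶜ) atTop (nhds 0) := by
      intro n
      have h1 : Tendsto (μ ∘ fun k => (B n k)ᶜ) atTop (nhds (μ (⋂ k, (B n k)ᶜ))) := by
        refine tendsto_measure_iInter_atTop (fun k => (hall _).nullMeasurableSet)
          (fun k l hkl => Set.compl_subset_compl.mpr (hBmono n hkl)) ⟨0, measure_ne_top μ _⟩
      have h2 : (⋂ k, (B n k)ᶜ) = ∅ := by
        rw [← Set.compl_iUnion, hBunion n, Set.compl_univ]
      rw [h2, measure_empty] at h1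
      exact h1
    have hsel : ∀ n : ℕ, ∃ k, μ (B n k)ᶜ ≤ ENNReal.ofReal (1 / (n + 1)) := by
      intro n
      have hpos : (0 : ENNReal) < ENNReal.ofReal (1 / (n + 1)) := by
        rw [ENNReal.ofReal_pos]; positivity
      obtain ⟨k, hk⟩ := ((hμtend n).eventually_le_const hpos).exists
      exact ⟨k, hk⟩
    choose k hk using hsel
    -- the approximating functions
    set h : ℕ → X → ℝ → ℝ := fun n x y => if x ∈ B n (k n) then g x n y else 0 with hh
    have hhbd : ∀ n x y, |h n x y| ≤ M := by
      intro n x y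
      rw [hh]
      dsimp only
      split
      · exact hgbd x n y
      · simpa using hM
    have hhclass : ∀ n x, BaireClassOrd (δ (k n)) (h n x) := by
      intro n x
      by_cases hx : x ∈ B n (k n)
      · have : h n x = g x n := by funext y; simp [hh, hx]
        rw [this]; exact hx
      · have : h n x = fun _ => (0 : ℝ) := by funext y; simp [hh, hx]
        rw [this]
        exact mono (.zero _ continuous_const) zero_le
    -- the integrals of h n are of class δ (k n) < α
    have hFclass : ∀ n, BaireClassOrd (δ (k n)) (fun y => ∫ x, h n x y ∂μ) :=
      fun n => IH (δ (k n)) (hδlt (k n)) ((hδlt (k n)).trans hα) μ hfin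
        (h n) M (hhbd n) (hhclass n)
    -- convergence
    refine .lim α _ (fun n => δ (k n)) (fun n y => ∫ x, h n x y ∂μ)
      (fun n => hδlt (k n)) hFclass ?_
    intro y
    -- DCT for ∫ g x n y → ∫ f x y
    have hDCT : Tendsto (fun n => ∫ x, g x n y ∂μ) atTop (nhds (∫ x, f x y ∂μ)) := by
      refine tendsto_integral_of_dominated_convergence (fun _ => M)
        (fun n => hmeas _) (integrable_const M)
        (fun n => Eventually.of_forall fun x => by
          simpa [Real.norm_eq_abs] using hgbd x n y)
        (Eventually.of_forall fun x => hglim x y)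
    -- error bound
    have herr : ∀ n, |(∫ x, h n x y ∂μ) - ∫ x, g x n y ∂μ| ≤ M * (1 / (n + 1)) := by
      intro n
      have hint1 : Integrable (fun x => h n x y) μ :=
        integrable_of_bounded hall μ _ M (fun x => hhbd n x y)
      have hint2 : Integrable (fun x => g x n y) μ :=
        integrable_of_bounded hall μ _ M (fun x => hgbd x n y)
      rw [← integral_sub hint1 hint2]
      have hptbd : ∀ x, |h n x y - g x n y| ≤ ((B n (k n))ᶜ).indicator (fun _ => M) x := by
        intro x
        by_cases hx : x ∈ B n (k n)
        · simp [hh, hx]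
        · simp only [Set.indicator_of_mem (Set.mem_compl hx), hh, if_neg hx, zero_sub, abs_neg]
          exact hgbd x n y
      calc |∫ x, (h n x y - g x n y) ∂μ|
          ≤ ∫ x, ((B n (k n))ᶜ).indicator (fun _ => M) x ∂μ := by
            have habs : |∫ x, (h n x y - g x n y) ∂μ| ≤ ∫ x, |h n x y - g x n y| ∂μ := by
              simpa [Real.norm_eq_abs] using
                norm_integral_le_integral_norm (μ := μ) (fun x => h n x y - g x n y)
            refine habs.trans ?_
            refine integral_mono (hint1.sub hint2).abs ?_ hptbd
            exact (integrable_const M).indicator (hall _)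
        _ = (μ (B n (k n))ᶜ).toReal * M := by
            rw [integral_indicator_const _ (hall _)]; simp [mul_comm, Measure.real]
        _ ≤ (1 / (n + 1)) * M := by
            apply mul_le_mul_of_nonneg_right _ hM
            have := ENNReal.toReal_mono (by simp) (hk n)
            rwa [ENNReal.toReal_ofReal (by positivity)] at this
        _ = M * (1 / (n + 1)) := mul_comm _ _
    have herr0 : Tendsto (fun n => (∫ x, h n x y ∂μ) - ∫ x, g x n y ∂μ) atTop (nhds 0) := by
      have hb : Tendsto (fun n : ℕ => M * (1 / (n + 1) : ℝ)) atTop (nhds 0) := by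
        have := tendsto_one_div_add_atTop_nhds_zero_nat (𝕜 := ℝ)
        simpa using (this.const_mul M)
      refine squeeze_zero_norm (fun n => ?_) hb
      simpa [Real.norm_eq_abs] using herr n
    have := herr0.add hDCT
    simpa using this

end BaireAux

/-- If `μ` is a probability measure on a space where all sets are measurable,
`f` is bounded and each section `f x` is of Baire class `α < ω₁`, then
`y ↦ ∫ f(x,y) dμ(x)` is of Baire class `α`. -/
theorem baireClassOrd_integral {X : Type} [MeasurableSpace X]
    (hall : ∀ s : Set X, MeasurableSet s)
    (μ : Measure X) [IsProbabilityMeasure μ]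
    (α : Ordinal.{0}) (hα : α < (Cardinal.aleph 1).ord)
    (f : X → ℝ → ℝ) (M : ℝ) (hbd : ∀ x y, |f x y| ≤ M)
    (hf : ∀ x, BaireClassOrd α (f x)) :
    BaireClassOrd α (fun y => ∫ x, f x y ∂μ) :=
  BaireAux.main hall α hα μ inferInstance f M hbd hf
end

section
/- If f : ℝ → ℝ has countable range and the preimage of every singleton is a G_δ set, then f is of Baire class 2. -/
open MeasureTheory Filter Set Topology
theorem baireOne_of_continuous {f : ℝ → ℝ} (hf : Continuous f) : BaireClass 1 f :=
  ⟨fun _ => f, fun _ => hf, fun _ => tendsto_const_nhds⟩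

open Classical in
theorem baireOne_ite {V : Set ℝ} (hV : IsOpen V) (a : ℝ) {h : ℝ → ℝ}
    (hh : BaireClass 1 h) : BaireClass 1 (fun x => if x ∈ V then a else h x) := by
  by_cases hVc : Vᶜ = ∅
  · have hVu : V = univ := by
      rw [← compl_empty, ← hVc, compl_compl]
    have : (fun x : ℝ => if x ∈ V then a else h x) = fun _ => a := by
      funext x; rw [if_pos (hVu ▸ mem_univ x)]
    rw [this]
    exact baireOne_of_continuous continuous_const
  · obtain ⟨ψ, hψc, hψl⟩ := hh
    have hVcc : IsClosed Vᶜ := hV.isClosed_compl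
    have hVcn : Vᶜ.Nonempty := nonempty_iff_ne_empty.2 hVc
    set θ : ℕ → ℝ → ℝ := fun j x => min 1 (j * Metric.infDist x Vᶜ) with hθ
    refine ⟨fun j x => θ j x * a + (1 - θ j x) * ψ j x, fun j => ?_, fun x => ?_⟩
    · have hθc : Continuous (θ j) :=
        continuous_const.min (continuous_const.mul (Metric.continuous_infDist_pt _))
      exact ((hθc.mul continuous_const).add ((continuous_const.sub hθc).mul (hψc j)))
    · by_cases hx : x ∈ V
      · show Tendsto (fun j : ℕ => θ j x * a + (1 - θ j x) * ψ j x) atTop (𝓝 (if x ∈ V then a else h x))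
        rw [if_pos hx]
        have hd : 0 < Metric.infDist x Vᶜ :=
          (hVcc.notMem_iff_infDist_pos hVcn).1 (by simpa using hx)
        have : ∀ᶠ j : ℕ in atTop, θ j x * a + (1 - θ j x) * ψ j x = a := by
          obtain ⟨N, hN⟩ := exists_nat_ge (1 / Metric.infDist x Vᶜ)
          filter_upwards [eventually_ge_atTop N] with j hj
          have h1 : (1 : ℝ) ≤ j * Metric.infDist x Vᶜ := by
            rw [div_le_iff₀ hd] at hN
            calc (1:ℝ) ≤ N * Metric.infDist x Vᶜ := hN
              _ ≤ j * Metric.infDist x Vᶜ := by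
                  apply mul_le_mul_of_nonneg_right _ hd.le
                  exact_mod_cast hj
          have : θ j x = 1 := min_eq_left h1
          rw [this]; ring
        exact Tendsto.congr' (this.mono fun j hj => hj.symm) tendsto_const_nhds
      · show Tendsto (fun j : ℕ => θ j x * a + (1 - θ j x) * ψ j x) atTop (𝓝 (if x ∈ V then a else h x))
        rw [if_neg hx]
        have hd : Metric.infDist x Vᶜ = 0 := Metric.infDist_zero_of_mem (by simpa using hx)
        have hθ0 : ∀ j : ℕ, θ j x = 0 := by
          intro j; simp [hθ, hd]
        have : (fun j : ℕ => θ j x * a + (1 - θ j x) * ψ j x) = fun j => ψ j x := by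
          funext j; rw [hθ0 j]; ring
        rw [this]
        exact hψl x

open Classical in
/-- `chainN c V d n x` returns `c k` for the least `k < n` with `x ∈ V k`, else `d`. -/
noncomputable def chainN : ℕ → (ℕ → ℝ) → (ℕ → Set ℝ) → ℝ → ℝ → ℝ
  | 0, _, _, d, _ => d
  | (n+1), c, V, d, x =>
      if x ∈ V 0 then c 0 else chainN n (fun i => c (i+1)) (fun i => V (i+1)) d x

theorem chainN_zero (c : ℕ → ℝ) (V : ℕ → Set ℝ) (d : ℝ) (x : ℝ) :
    chainN 0 c V d x = d := rfl

open Classical in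
theorem chainN_succ (n : ℕ) (c : ℕ → ℝ) (V : ℕ → Set ℝ) (d : ℝ) (x : ℝ) :
    chainN (n+1) c V d x =
      if x ∈ V 0 then c 0 else chainN n (fun i => c (i+1)) (fun i => V (i+1)) d x := rfl

open Classical in
theorem chainN_baireOne (c : ℕ → ℝ) (V : ℕ → Set ℝ) (d : ℝ) (n : ℕ)
    (hV : ∀ k, IsOpen (V k)) : BaireClass 1 (chainN n c V d) := by
  induction n generalizing c V with
  | zero => exact baireOne_of_continuous continuous_const
  | succ n ih =>
      have := baireOne_ite (hV 0) (c 0)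
        (ih (fun i => c (i+1)) (fun i => V (i+1)) (fun k => hV (k+1)))
      have he : (fun x => chainN (n+1) c V d x) =
          fun x => if x ∈ V 0 then c 0 else chainN n (fun i => c (i+1)) (fun i => V (i+1)) d x := by
        funext x; exact chainN_succ n c V d x
      rw [show chainN (n+1) c V d = fun x => chainN (n+1) c V d x from rfl, he]
      exact this

open Classical in
theorem chainN_eval (c : ℕ → ℝ) (V : ℕ → Set ℝ) (d : ℝ) {n m : ℕ} {x : ℝ}
    (h1 : ∀ k < n, x ∉ V k) (h2 : x ∈ V n) (h3 : n < m) :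
    chainN m c V d x = c n := by
  induction n generalizing c V m with
  | zero =>
      obtain ⟨m', rfl⟩ := Nat.exists_eq_succ_of_ne_zero (Nat.pos_iff_ne_zero.1 h3)
      rw [chainN_succ, if_pos h2]
  | succ n ih =>
      obtain ⟨m', rfl⟩ := Nat.exists_eq_succ_of_ne_zero (Nat.pos_iff_ne_zero.1 (Nat.lt_of_le_of_lt (Nat.zero_le _) h3))
      have h0 : x ∉ V 0 := h1 0 (Nat.succ_pos n)
      rw [chainN_succ, if_neg h0]
      exact ih (fun i => c (i+1)) (fun i => V (i+1))
        (fun k hk => h1 (k+1) (Nat.succ_lt_succ hk)) h2 (Nat.lt_of_succ_lt_succ h3)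

/-- A real function with countable range whose point preimages are all `Gδ`
sets is of Baire class 2. -/
theorem baireTwo_of_countable_range_gdelta (f : ℝ → ℝ)
    (hr : (Set.range f).Countable)
    (hG : ∀ c : ℝ, IsGδ (f ⁻¹' {c})) :
    BaireClass 2 f := by
  obtain ⟨c, hc⟩ := hr.exists_eq_range ⟨f 0, mem_range_self 0⟩
  choose U hUo hUe using fun k => (hG (c k)).eq_iInter_nat
  -- V m k : finite intersection of the first m+1 opens for value k
  set V : ℕ → ℕ → Set ℝ := fun m k => ⋂ j ∈ Finset.range (m+1), U k j with hVdef
  have hVo : ∀ m k, IsOpen (V m k) :=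
    fun m k => isOpen_biInter_finset fun j _ => hUo k j
  refine ⟨fun m => chainN (m+1) c (V m) (c 0), fun m => chainN_baireOne c (V m) (c 0) (m+1) (hVo m), ?_⟩
  intro x
  have hx : f x ∈ range c := by rw [← hc]; exact mem_range_self x
  have hex : ∃ n, c n = f x := hx
  set n := Nat.find hex with hn
  have hcn : c n = f x := Nat.find_spec hex
  have hlt : ∀ k < n, c k ≠ f x := fun k hk => Nat.find_min hex hk
  -- for k < n, x is not in the full intersection, pick a witness index
  have hnot : ∀ k, k < n → ∃ j, x ∉ U k j := by
    intro k hk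
    by_contra hcon
    push_neg at hcon
    have : x ∈ f ⁻¹' {c k} := by rw [hUe k]; exact mem_iInter.2 hcon
    exact hlt k hk this.symm
  choose! J hJ using hnot
  set M := n + (Finset.range n).sup J with hM
  have : ∀ᶠ m : ℕ in atTop, chainN (m+1) c (V m) (c 0) x = f x := by
    filter_upwards [eventually_ge_atTop M] with m hm
    have hnm : n < m + 1 := by omega
    have hxn : x ∈ V m n := by
      have : x ∈ f ⁻¹' {c n} := by simp [hcn]
      rw [hUe n] at this
      exact mem_iInter₂.2 fun j _ => mem_iInter.1 this j
    have hxk : ∀ k < n, x ∉ V m k := by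
      intro k hk hmem
      have hJk : J k ≤ m := by
        have : J k ≤ (Finset.range n).sup J :=
          Finset.le_sup (Finset.mem_range.2 hk)
        omega
      exact hJ k hk (mem_iInter₂.1 hmem (J k) (Finset.mem_range.2 (by omega)))
    rw [chainN_eval c (V m) (c 0) hxk hxn hnm, hcn]
  exact Tendsto.congr' (this.mono fun m hm => hm.symm) tendsto_const_nhds
end

section
/- If f : ℝ → ℝ has countable range and the preimage of every singleton is an F_σδ set, then f is of Baire class 3. -/
open MeasureTheory Filter Set Topology
/-- An `Fσ` set: a countable union of closed sets. -/
def IsFsigma (s : Set ℝ) : Prop :=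
  ∃ F : ℕ → Set ℝ, (∀ n, IsClosed (F n)) ∧ s = ⋃ n, F n

/-- An `Fσδ` set: a countable intersection of `Fσ` sets. -/
def IsFsigmaDelta (s : Set ℝ) : Prop :=
  ∃ T : ℕ → Set ℝ, (∀ n, IsFsigma (T n)) ∧ s = ⋂ n, T n

/-! ### Auxiliary lemmas -/

noncomputable def ind (S : Set ℝ) (x : ℝ) : ℝ := S.indicator (fun _ => 1) x

lemma ind_of_mem {S : Set ℝ} {x : ℝ} (h : x ∈ S) : ind S x = 1 :=
  Set.indicator_of_mem h _

lemma ind_of_not_mem {S : Set ℝ} {x : ℝ} (h : x ∉ S) : ind S x = 0 :=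
  Set.indicator_of_notMem h _

lemma baireClass_succ {n : ℕ} {f : ℝ → ℝ} (h : BaireClass n f) : BaireClass (n + 1) f :=
  ⟨fun _ => f, fun _ => h, fun _ => tendsto_const_nhds⟩

lemma baireClass_const (n : ℕ) (a : ℝ) : BaireClass n (fun _ : ℝ => a) := by
  induction n with
  | zero => exact continuous_const
  | succ n ih => exact baireClass_succ ih

lemma baireClass_add : ∀ {n : ℕ} {f g : ℝ → ℝ}, BaireClass n f → BaireClass n g →
    BaireClass n (fun x => f x + g x) := by
  intro n
  induction n with
  | zero =>
    intro f g hf hg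
    exact (show Continuous f from hf).add hg
  | succ n ih =>
    rintro f g ⟨F, hFc, hFl⟩ ⟨G, hGc, hGl⟩
    exact ⟨fun k x => F k x + G k x, fun k => ih (hFc k) (hGc k),
      fun x => (hFl x).add (hGl x)⟩

lemma baireClass_mul : ∀ {n : ℕ} {f g : ℝ → ℝ}, BaireClass n f → BaireClass n g →
    BaireClass n (fun x => f x * g x) := by
  intro n
  induction n with
  | zero =>
    intro f g hf hg
    exact (show Continuous f from hf).mul hg
  | succ n ih =>
    rintro f g ⟨F, hFc, hFl⟩ ⟨G, hGc, hGl⟩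
    exact ⟨fun k x => F k x * G k x, fun k => ih (hFc k) (hGc k),
      fun x => (hFl x).mul (hGl x)⟩

lemma baireClass_sub : ∀ {n : ℕ} {f g : ℝ → ℝ}, BaireClass n f → BaireClass n g →
    BaireClass n (fun x => f x - g x) := by
  intro n
  induction n with
  | zero =>
    intro f g hf hg
    exact (show Continuous f from hf).sub hg
  | succ n ih =>
    rintro f g ⟨F, hFc, hFl⟩ ⟨G, hGc, hGl⟩
    exact ⟨fun k x => F k x - G k x, fun k => ih (hFc k) (hGc k),
      fun x => (hFl x).sub (hGl x)⟩

lemma baireClass_sum {ι : Type*} {n : ℕ} (s : Finset ι) (F : ι → ℝ → ℝ)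
    (h : ∀ i ∈ s, BaireClass n (F i)) :
    BaireClass n (fun x => ∑ i ∈ s, F i x) := by
  classical
  induction s using Finset.induction with
  | empty => simpa using baireClass_const n 0
  | @insert a s ha ih =>
    simp only [Finset.sum_insert ha]
    exact baireClass_add (h a (Finset.mem_insert_self a s))
      (ih fun i hi => h i (Finset.mem_insert_of_mem hi))

lemma baireClass_prod {ι : Type*} {n : ℕ} (s : Finset ι) (F : ι → ℝ → ℝ)
    (h : ∀ i ∈ s, BaireClass n (F i)) :
    BaireClass n (fun x => ∏ i ∈ s, F i x) := by
  classical
  induction s using Finset.induction with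
  | empty => simpa using baireClass_const n 1
  | @insert a s ha ih =>
    simp only [Finset.prod_insert ha]
    exact baireClass_mul (h a (Finset.mem_insert_self a s))
      (ih fun i hi => h i (Finset.mem_insert_of_mem hi))

lemma ind_closed_baire1 {C : Set ℝ} (hC : IsClosed C) : BaireClass 1 (ind C) := by
  rcases C.eq_empty_or_nonempty with rfl | hne
  · have : ind (∅ : Set ℝ) = fun _ => (0 : ℝ) := by
      funext x; exact ind_of_not_mem (notMem_empty x)
    rw [this]
    exact baireClass_succ (baireClass_const 0 0)
  · refine ⟨fun m x => max 0 (1 - (m + 1) * Metric.infDist x C), fun m => ?_, fun x => ?_⟩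
    · exact continuous_const.max
        (continuous_const.sub (continuous_const.mul (Metric.continuous_infDist_pt C)))
    · by_cases hx : x ∈ C
      · have h0 : Metric.infDist x C = 0 := Metric.infDist_zero_of_mem hx
        have : ∀ m : ℕ, max 0 (1 - (m + 1 : ℝ) * Metric.infDist x C) = 1 := by
          intro m; rw [h0]; norm_num
        rw [ind_of_mem hx]
        simp only [this]
        exact tendsto_const_nhds
      · have hd : 0 < Metric.infDist x C := by
          rcases lt_or_eq_of_le (Metric.infDist_nonneg (x := x) (s := C)) with h | h
          · exact h
          · exact absurd (((hC.mem_iff_infDist_zero hne).2 h.symm)) hx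
        rw [ind_of_not_mem hx]
        apply tendsto_const_nhds.congr'
        obtain ⟨M, hM⟩ := exists_nat_ge (1 / Metric.infDist x C)
        filter_upwards [eventually_ge_atTop M] with m hm
        have h1 : (1 : ℝ) ≤ (m + 1) * Metric.infDist x C := by
          rw [div_le_iff₀ hd] at hM
          calc (1:ℝ) ≤ M * Metric.infDist x C := hM
            _ ≤ (m + 1) * Metric.infDist x C := by
                apply mul_le_mul_of_nonneg_right _ hd.le
                exact_mod_cast Nat.le_succ_of_le hm
        rw [max_eq_left (by linarith)]

lemma ind_fsigma_baire2 {S : Set ℝ} (hS : IsFsigma S) : BaireClass 2 (ind S) := by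
  obtain ⟨F, hFc, rfl⟩ := hS
  refine ⟨fun m => ind (⋃ i ∈ Finset.range (m + 1), F i), fun m => ?_, fun x => ?_⟩
  · exact ind_closed_baire1 (isClosed_biUnion_finset (fun i _ => hFc i))
  · by_cases hx : x ∈ ⋃ n, F n
    · obtain ⟨i, hi⟩ := mem_iUnion.1 hx
      rw [ind_of_mem hx]
      apply tendsto_const_nhds.congr'
      filter_upwards [eventually_ge_atTop i] with m hm
      have : x ∈ ⋃ j ∈ Finset.range (m + 1), F j :=
        mem_biUnion (Finset.mem_range.2 (Nat.lt_succ_of_le hm)) hi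
      rw [ind_of_mem this]
    · rw [ind_of_not_mem hx]
      have : ∀ m, ind (⋃ i ∈ Finset.range (m + 1), F i) x = 0 := by
        intro m
        apply ind_of_not_mem
        intro hxm
        obtain ⟨i, _, hi⟩ := mem_iUnion₂.1 hxm
        exact hx (mem_iUnion.2 ⟨i, hi⟩)
      simp only [this]
      exact tendsto_const_nhds

lemma IsFsigma.inter {s t : Set ℝ} (hs : IsFsigma s) (ht : IsFsigma t) : IsFsigma (s ∩ t) := by
  obtain ⟨F, hFc, rfl⟩ := hs
  obtain ⟨G, hGc, rfl⟩ := ht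
  refine ⟨fun p => F p.unpair.1 ∩ G p.unpair.2, fun p => (hFc _).inter (hGc _), ?_⟩
  ext x
  simp only [mem_inter_iff, mem_iUnion]
  constructor
  · rintro ⟨⟨i, hi⟩, j, hj⟩
    exact ⟨Nat.pair i j, by simpa [Nat.unpair_pair] using ⟨hi, hj⟩⟩
  · rintro ⟨p, h1, h2⟩
    exact ⟨⟨_, h1⟩, _, h2⟩

lemma isFsigma_biInter_range (T : ℕ → Set ℝ) (h : ∀ j, IsFsigma (T j)) (n : ℕ) :
    IsFsigma (⋂ j ∈ Finset.range (n + 1), T j) := by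
  induction n with
  | zero => simpa using h 0
  | succ n ih =>
    rw [Finset.range_add_one, Finset.set_biInter_insert]
    exact (h (n + 1)).inter ih

/-- A real function with countable range whose point preimages are all `Fσδ`
sets is of Baire class 3. -/
theorem baireThree_of_countable_range_fsigmadelta (f : ℝ → ℝ)
    (hr : (Set.range f).Countable)
    (hF : ∀ c : ℝ, IsFsigmaDelta (f ⁻¹' {c})) :
    BaireClass 3 f := by
  obtain ⟨c, hc⟩ := Set.Countable.exists_eq_range hr ⟨f 0, mem_range_self 0⟩
  choose T hT1 hT2 using fun k => hF (c k)
  set S : ℕ → ℕ → Set ℝ := fun k n => ⋂ j ∈ Finset.range (n + 1), T k j with hSdef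
  have hSfsig : ∀ k n, IsFsigma (S k n) := fun k n => isFsigma_biInter_range _ (hT1 k) n
  have hSsub : ∀ k n m, m ≤ n → S k n ⊆ T k m := by
    intro k n m hm x hx
    exact mem_iInter₂.1 hx m (Finset.mem_range.2 (Nat.lt_succ_of_le hm))
  have hAS : ∀ k n x, f x = c k → x ∈ S k n := by
    intro k n x hx
    have hx' : x ∈ f ⁻¹' {c k} := hx
    rw [hT2 k] at hx'
    exact mem_iInter₂.2 fun j _ => mem_iInter.1 hx' j
  refine ⟨fun n x => ∑ k ∈ Finset.range (n + 1),
      c k * (ind (S k n) x * ∏ j ∈ Finset.range k, (1 - ind (S j n) x)),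
      fun n => ?_, fun x => ?_⟩
  · apply baireClass_sum
    intro k _
    refine baireClass_mul (baireClass_const 2 (c k)) ?_
    refine baireClass_mul (ind_fsigma_baire2 (hSfsig k n)) ?_
    apply baireClass_prod
    intro j _
    exact baireClass_sub (baireClass_const 2 1) (ind_fsigma_baire2 (hSfsig j n))
  · have hex : ∃ k, f x = c k := by
      have hfx : f x ∈ Set.range c := hc ▸ mem_range_self x
      obtain ⟨k, hk⟩ := hfx
      exact ⟨k, hk.symm⟩
    set j := Nat.find hex with hjdef
    have hj : f x = c j := Nat.find_spec hex
    have hjmin : ∀ k, k < j → f x ≠ c k := fun k hk => Nat.find_min hex hk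
    have hmk : ∀ k, ∃ m, k < j → x ∉ T k m := by
      intro k
      by_cases hk : k < j
      · have hxk : x ∉ f ⁻¹' {c k} := fun h => hjmin k hk h
        rw [hT2 k, mem_iInter] at hxk
        push_neg at hxk
        obtain ⟨m, hm⟩ := hxk
        exact ⟨m, fun _ => hm⟩
      · exact ⟨0, fun h => absurd h hk⟩
    choose m hm using hmk
    have hnotmem : ∀ k n, k < j → (Finset.range j).sup m ≤ n → x ∉ S k n := by
      intro k n hk hn hxS
      exact hm k hk (hSsub k n (m k) (le_trans (Finset.le_sup (Finset.mem_range.2 hk)) hn) hxS)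
    apply tendsto_const_nhds.congr'
    filter_upwards [eventually_ge_atTop (max j ((Finset.range j).sup m))] with n hn
    have hjn : j ≤ n := le_trans (le_max_left _ _) hn
    have hsn : (Finset.range j).sup m ≤ n := le_trans (le_max_right _ _) hn
    have hterm : ∀ k ∈ Finset.range (n + 1), k ≠ j →
        c k * (ind (S k n) x * ∏ i ∈ Finset.range k, (1 - ind (S i n) x)) = 0 := by
      intro k _ hkj
      rcases lt_or_gt_of_ne hkj with h | h
      · rw [ind_of_not_mem (hnotmem k n h hsn)]
        ring
      · have : ∏ i ∈ Finset.range k, (1 - ind (S i n) x) = 0 := by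
          apply Finset.prod_eq_zero (Finset.mem_range.2 h)
          rw [ind_of_mem (hAS j n x hj)]
          ring
        rw [this]
        ring
    rw [Finset.sum_eq_single_of_mem j (Finset.mem_range.2 (Nat.lt_succ_of_le hjn)) hterm]
    have h1 : ind (S j n) x = 1 := ind_of_mem (hAS j n x hj)
    have h2 : ∏ i ∈ Finset.range j, (1 - ind (S i n) x) = 1 := by
      apply Finset.prod_eq_one
      intro i hi
      rw [ind_of_not_mem (hnotmem i n (Finset.mem_range.1 hi) hsn)]
      ring
    rw [h1, h2, hj]
    ring
end

section
/- Let E ⊆ ℝ² be compact, ε > 0, and for each n define A_n^ε = {(x,y) ∈ E : λ(E_x ∩ I) ≥ (1−ε)λ(I) for every closed nondegenerate interval I with y ∈ I and |I| < 1/n}. Then A_n^ε is a closed subset of ℝ². -/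
open MeasureTheory Filter Set Topology

/-- For compact `E ⊆ ℝ²`, the set `Aₙ^ε` of points `(x,y) ∈ E` such that
`λ(E_x ∩ I) ≥ (1-ε) λ(I)` for every closed nondegenerate interval `I ∋ y`
of length `< 1/n` is closed. -/
theorem isClosed_A_n_eps (E : Set (ℝ × ℝ)) (hE : IsCompact E)
    (ε : ℝ) (hε : 0 < ε) (n : ℕ) (hn : 0 < n) :
    IsClosed {p : ℝ × ℝ | p ∈ E ∧ ∀ a b : ℝ, a ≤ p.2 → p.2 ≤ b → a < b →
      b - a < 1 / (n : ℝ) →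
      ENNReal.ofReal ((1 - ε) * (b - a)) ≤
        volume ({y : ℝ | (p.1, y) ∈ E} ∩ Icc a b)} := by
  apply IsSeqClosed.isClosed
  intro u p hu hup
  have hxE : p ∈ E := hE.isClosed.mem_of_tendsto hup
    (Filter.Eventually.of_forall fun k => (hu k).1)
  refine ⟨hxE, fun a b ha hb hab hlen => ?_⟩
  rcases le_or_gt 1 ε with hε1 | hε1
  · have h0 : (1 - ε) * (b - a) ≤ 0 :=
      mul_nonpos_of_nonpos_of_nonneg (by linarith) (by linarith)
    simp [ENNReal.ofReal_eq_zero.2 h0]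
  -- main case : ε < 1
  set M := volume ({y : ℝ | (p.1, y) ∈ E} ∩ Icc a b) with hMdef
  have hMfin : M < ⊤ := lt_of_le_of_lt (measure_mono Set.inter_subset_right)
      (by rw [Real.volume_Icc]; exact ENNReal.ofReal_lt_top)
  apply ENNReal.le_of_forall_pos_le_add
  intro ε' hε' _
  set η : ℝ := (ε' : ℝ) / 2 with hηdef
  have hηpos : 0 < η := by positivity
  -- outer regularity: open V ⊇ E_{p.1} ∩ [a,b] of measure < M + η
  obtain ⟨V, hSV, hVopen, hVvol⟩ :=
    Set.exists_isOpen_lt_of_lt ({y : ℝ | (p.1, y) ∈ E} ∩ Icc a b)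
      (M + ENNReal.ofReal η)
      (ENNReal.lt_add_right hMfin.ne
        (by simpa [ENNReal.ofReal_eq_zero] using hηpos))
  set U : Set ℝ := V ∪ (Icc a b)ᶜ with hUdef
  have hUopen : IsOpen U := hVopen.union isClosed_Icc.isOpen_compl
  have hEpU : ∀ y : ℝ, (p.1, y) ∈ E → y ∈ U := by
    intro y hy
    by_cases hyI : y ∈ Icc a b
    · exact Or.inl (hSV ⟨hy, hyI⟩)
    · exact Or.inr hyI
  -- tube lemma
  set K : Set (ℝ × ℝ) := E ∩ (Prod.snd ⁻¹' Uᶜ) with hKdef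
  have hKcomp : IsCompact K :=
    hE.inter_right (hUopen.isClosed_compl.preimage continuous_snd)
  set C : Set ℝ := Prod.fst '' K with hCdef
  have hCclosed : IsClosed C := (hKcomp.image continuous_fst).isClosed
  have hpC : p.1 ∉ C := by
    rintro ⟨q, ⟨hqE, hqU⟩, hq1⟩
    have hq' : (q.1, q.2) ∈ E := by simpa using hqE
    rw [hq1] at hq'
    exact hqU (hEpU q.2 hq')
  have hnbd : Cᶜ ∈ 𝓝 p.1 := hCclosed.isOpen_compl.mem_nhds hpC
  have hx : Tendsto (fun k => (u k).1) atTop (𝓝 p.1) :=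
    (continuous_fst.tendsto p).comp hup
  have ht : Tendsto (fun k => (u k).2) atTop (𝓝 p.2) :=
    (continuous_snd.tendsto p).comp hup
  have ev1 : ∀ᶠ k in atTop, (u k).1 ∈ Cᶜ := hx hnbd
  -- the "defect" tends to 0
  have hδt : Tendsto (fun k => (a - min a (u k).2) + (max b (u k).2 - b))
      atTop (𝓝 0) := by
    have h1 : Tendsto (fun k => min a (u k).2) atTop (𝓝 a) := by
      have := (tendsto_const_nhds (x := a) (f := atTop (α := ℕ))).min ht
      rwa [min_eq_left ha] at this
    have h2 : Tendsto (fun k => max b (u k).2) atTop (𝓝 b) := by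
      have := (tendsto_const_nhds (x := b) (f := atTop (α := ℕ))).max ht
      rwa [max_eq_left hb] at this
    have h3 := ((tendsto_const_nhds (x := a) (f := atTop (α := ℕ))).sub h1).add
      (h2.sub (tendsto_const_nhds (x := b)))
    simpa using h3
  have ev2 : ∀ᶠ k in atTop,
      (a - min a (u k).2) + (max b (u k).2 - b) <
        min η (1 / (n : ℝ) - (b - a)) :=
    hδt.eventually_lt_const (lt_min hηpos (by linarith))
  obtain ⟨k, hk1, hk2⟩ := (ev1.and ev2).exists
  set ak : ℝ := min a (u k).2 with hakdef
  set bk : ℝ := max b (u k).2 with hbkdef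
  have hak_le : ak ≤ a := min_le_left _ _
  have hbk_ge : b ≤ bk := le_max_left _ _
  have hδη : (a - ak) + (bk - b) < η := hk2.trans_le (min_le_left _ _)
  have hδn : (a - ak) + (bk - b) < 1 / (n : ℝ) - (b - a) :=
    hk2.trans_le (min_le_right _ _)
  have hmain := (hu k).2 ak bk (min_le_right _ _) (le_max_right _ _)
    (lt_of_le_of_lt hak_le (lt_of_lt_of_le hab hbk_ge)) (by linarith)
  have hsub : {y : ℝ | ((u k).1, y) ∈ E} ∩ Icc ak bk ⊆
      ({y : ℝ | ((u k).1, y) ∈ E} ∩ Icc a b) ∪ (Icc ak a ∪ Icc b bk) := by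
    rintro y ⟨hyE, hy1, hy2⟩
    rcases le_or_gt a y with h1 | h1
    · rcases le_or_gt y b with h2 | h2
      · exact Or.inl ⟨hyE, h1, h2⟩
      · exact Or.inr (Or.inr ⟨h2.le, hy2⟩)
    · exact Or.inr (Or.inl ⟨hy1, h1.le⟩)
  have hEk : {y : ℝ | ((u k).1, y) ∈ E} ∩ Icc a b ⊆ V := by
    rintro y ⟨hyE, hyI⟩
    have hyU : y ∈ U := by
      by_contra hyU
      exact hk1 ⟨((u k).1, y), ⟨hyE, hyU⟩, rfl⟩
    rcases hyU with h | h
    · exact h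
    · exact absurd hyI h
  calc ENNReal.ofReal ((1 - ε) * (b - a))
      ≤ ENNReal.ofReal ((1 - ε) * (bk - ak)) :=
        ENNReal.ofReal_le_ofReal
          (mul_le_mul_of_nonneg_left (by linarith) (by linarith))
    _ ≤ volume ({y : ℝ | ((u k).1, y) ∈ E} ∩ Icc ak bk) := hmain
    _ ≤ volume (({y : ℝ | ((u k).1, y) ∈ E} ∩ Icc a b) ∪
          (Icc ak a ∪ Icc b bk)) := measure_mono hsub
    _ ≤ volume ({y : ℝ | ((u k).1, y) ∈ E} ∩ Icc a b) +
          volume (Icc ak a ∪ Icc b bk) := measure_union_le _ _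
    _ ≤ volume V + (volume (Icc ak a) + volume (Icc b bk)) :=
        add_le_add (measure_mono hEk) (measure_union_le _ _)
    _ ≤ (M + ENNReal.ofReal η) + ENNReal.ofReal η := by
        refine add_le_add hVvol.le ?_
        rw [Real.volume_Icc, Real.volume_Icc,
          ← ENNReal.ofReal_add (by linarith) (by linarith)]
        exact ENNReal.ofReal_le_ofReal hδη.le
    _ = M + ↑ε' := by
        rw [add_assoc, ← ENNReal.ofReal_add hηpos.le hηpos.le]
        congr 1
        rw [← ENNReal.ofReal_coe_nnreal]
        congr 1
        rw [hηdef]; ring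
end

section
/- Let g : ℝ² → ℝ be Lebesgue measurable. Then there exists a set B ⊆ ℝ² of planar measure zero such that for every (x,y) ∉ B, the function g_x : y' ↦ g(x,y') is approximately continuous at y. -/
open MeasureTheory Filter Set Topology

/-- `S` has Lebesgue density one at `y`. -/
def HasDensityOne (S : Set ℝ) (y : ℝ) : Prop :=
  Tendsto (fun h : ℝ => volume (S ∩ Icc (y - h) (y + h)) / ENNReal.ofReal (2 * h))
    (𝓝[>] 0) (𝓝 1)

/-- `f` is approximately continuous: the preimage of every open set is Lebesgue
measurable and has density one at each of its points (i.e. it is open in the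
density topology). -/
def ApproxContinuous (f : ℝ → ℝ) : Prop :=
  ∀ U : Set ℝ, IsOpen U →
    NullMeasurableSet (f ⁻¹' U) volume ∧ ∀ y ∈ f ⁻¹' U, HasDensityOne (f ⁻¹' U) y

/-- `f` is approximately continuous at the point `y`. -/
def ApproxContinuousAt (f : ℝ → ℝ) (y : ℝ) : Prop :=
  ∀ U : Set ℝ, IsOpen U → f y ∈ U →
    NullMeasurableSet (f ⁻¹' U) volume ∧ HasDensityOne (f ⁻¹' U) y

open scoped ENNReal

noncomputable def useq (n : ℕ) : ℝ := 1 / ((n : ℝ) + 1)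

lemma useq_pos (n : ℕ) : 0 < useq n := by unfold useq; positivity

lemma useq_tendsto : Tendsto useq atTop (𝓝[>] (0 : ℝ)) := by
  apply tendsto_nhdsWithin_of_tendsto_nhds_of_eventually_within
  · exact tendsto_one_div_add_atTop_nhds_zero_nat
  · exact Eventually.of_forall fun n => useq_pos n

lemma ratio_le_one (S : Set ℝ) (y h : ℝ) :
    volume (S ∩ Icc (y - h) (y + h)) / ENNReal.ofReal (2 * h) ≤ 1 := by
  have hV : volume (Icc (y - h) (y + h)) = ENNReal.ofReal (2 * h) := by
    rw [Real.volume_Icc]; ring_nf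
  have h1 : volume (S ∩ Icc (y - h) (y + h)) ≤ ENNReal.ofReal (2 * h) := by
    rw [← hV]; exact measure_mono inter_subset_right
  exact ENNReal.div_le_of_le_mul (by simpa using h1)

lemma limsup_ratio_le_one (S : Set ℝ) (y : ℝ) :
    limsup (fun h : ℝ => volume (S ∩ Icc (y - h) (y + h)) / ENNReal.ofReal (2 * h))
      (𝓝[>] 0) ≤ 1 := by
  apply limsup_le_of_le
  · isBoundedDefault
  · exact Eventually.of_forall fun h => ratio_le_one S y h

/-- Density one along the sequence of radii `1/(n+1)` implies density one. -/
lemma seq_to_density (S : Set ℝ) (y : ℝ)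
    (hseq : Tendsto (fun n => volume (S ∩ Icc (y - useq n) (y + useq n)) /
      ENNReal.ofReal (2 * useq n)) atTop (𝓝 1)) : HasDensityOne S y := by
  set f : ℝ → ℝ≥0∞ := fun h => volume (S ∩ Icc (y - h) (y + h)) / ENNReal.ofReal (2 * h) with hf
  set φ : ℕ → ℝ≥0∞ := fun k =>
    (volume (S ∩ Icc (y - useq (k + 1)) (y + useq (k + 1))) / ENNReal.ofReal (2 * useq (k + 1)))
      * ENNReal.ofReal (useq (k + 1) / useq k) with hφ
  have hφ_tendsto : Tendsto φ atTop (𝓝 1) := by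
    have h1 : Tendsto (fun k => volume (S ∩ Icc (y - useq (k + 1)) (y + useq (k + 1))) /
        ENNReal.ofReal (2 * useq (k + 1))) atTop (𝓝 1) :=
      hseq.comp (tendsto_add_atTop_nat 1)
    have h2 : Tendsto (fun k : ℕ => ENNReal.ofReal (useq (k + 1) / useq k)) atTop (𝓝 1) := by
      have h3 : Tendsto (fun k : ℕ => useq (k + 1) / useq k) atTop (𝓝 1) := by
        have heq : ∀ k : ℕ, useq (k + 1) / useq k = 1 - 1 / ((k : ℝ) + 2) := by
          intro k
          have hk1 : ((k : ℝ) + 1) ≠ 0 := by positivity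
          have hk2 : ((k : ℝ) + 2) ≠ 0 := by positivity
          simp only [useq]
          push_cast
          field_simp
          ring
        rw [funext heq]
        have : Tendsto (fun k : ℕ => 1 / ((k : ℝ) + 2)) atTop (𝓝 0) := by
          have := (tendsto_one_div_add_atTop_nhds_zero_nat (𝕜 := ℝ)).comp (tendsto_add_atTop_nat 1)
          convert this using 2 with k
          simp [Function.comp]
          ring
        simpa using (tendsto_const_nhds (x := (1:ℝ))).sub this
      have := (ENNReal.continuous_ofReal.tendsto 1).comp h3
      simpa [Function.comp_def] using this
    have := ENNReal.Tendsto.mul h1 (Or.inr ENNReal.one_ne_top) h2 (Or.inr ENNReal.one_ne_top)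
    simpa [hφ] using this
  set nn : ℝ → ℕ := fun h => ⌊1 / h⌋₊ - 1 with hnn
  have hnn_tendsto : Tendsto nn (𝓝[>] (0:ℝ)) atTop := by
    apply (tendsto_sub_atTop_nat 1).comp
    apply tendsto_nat_floor_atTop.comp
    have h4 : Tendsto (fun h : ℝ => h⁻¹) (𝓝[>] (0:ℝ)) atTop := tendsto_inv_nhdsGT_zero
    exact h4.congr (fun h => (one_div h).symm)
  have key : ∀ᶠ h in 𝓝[>] (0:ℝ), φ (nn h) ≤ f h := by
    have hmem : Ioo (0:ℝ) (1/2) ∈ 𝓝[>] (0:ℝ) :=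
      Ioo_mem_nhdsGT_of_mem ⟨le_refl 0, by norm_num⟩
    filter_upwards [hmem] with h hh
    obtain ⟨hh0, hh2⟩ := hh
    set k : ℕ := ⌊1 / h⌋₊ with hk
    have hinv : (2:ℝ) ≤ 1 / h := by
      rw [le_div_iff₀ hh0]; linarith
    have hk2 : 2 ≤ k := Nat.le_floor (by exact_mod_cast hinv)
    have hk1 : 1 ≤ k := le_trans (by norm_num) hk2
    have hkpos : (0:ℝ) < (k:ℝ) := by
      have : (0:ℕ) < k := lt_of_lt_of_le (by norm_num) hk2
      exact_mod_cast this
    have hnnk : nn h + 1 = k := by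
      simp only [hnn]
      omega
    have hfl1 : (1:ℝ) / h < (k:ℝ) + 1 := by
      have := Nat.lt_floor_add_one (1 / h)
      exact_mod_cast this
    have hukh : useq k ≤ h := by
      unfold useq
      rw [div_le_iff₀ (by positivity)]
      rw [div_lt_iff₀ hh0] at hfl1
      nlinarith
    have hfl2 : (k:ℝ) ≤ 1 / h := by
      have := Nat.floor_le (le_of_lt (by positivity : (0:ℝ) < 1 / h))
      exact_mod_cast this
    have hcast : ((nn h : ℝ)) + 1 = (k : ℝ) := by exact_mod_cast congrArg (Nat.cast (R := ℝ)) hnnk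
    have hhuk : h ≤ useq (nn h) := by
      unfold useq
      rw [hcast, le_div_iff₀ hkpos]
      rw [le_div_iff₀ hh0] at hfl2
      nlinarith
    set a := volume (S ∩ Icc (y - useq k) (y + useq k)) with ha
    set b := ENNReal.ofReal (2 * useq k) with hb
    set c := ENNReal.ofReal (2 * useq (nn h)) with hc
    have hb0 : b ≠ 0 := (ENNReal.ofReal_pos.2 (by have := useq_pos k; linarith)).ne'
    have hbt : b ≠ ⊤ := ENNReal.ofReal_ne_top
    have hφval : φ (nn h) = a / b * (b / c) := by
      simp only [hφ, hnnk, ← ha, ← hb, ← hc]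
      congr 1
      have h2pos : (0:ℝ) < 2 * useq (nn h) := by have := useq_pos (nn h); linarith
      rw [hb, hc, ← ENNReal.ofReal_div_of_pos h2pos]
      congr 1
      rw [mul_div_mul_left _ _ (two_ne_zero)]
    have hcancel : a / b * (b / c) = a / c := by
      rw [div_eq_mul_inv, div_eq_mul_inv, div_eq_mul_inv]
      calc a * b⁻¹ * (b * c⁻¹) = a * c⁻¹ * (b⁻¹ * b) := by ring
        _ = a * c⁻¹ := by rw [ENNReal.inv_mul_cancel hb0 hbt, mul_one]
    have hle : a / c ≤ f h := by
      apply ENNReal.div_le_div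
      · apply measure_mono
        apply inter_subset_inter_right
        apply Icc_subset_Icc <;> linarith
      · rw [hc]
        apply ENNReal.ofReal_le_ofReal
        linarith
    rw [hφval, hcancel]
    exact hle
  have h1le : (1:ℝ≥0∞) ≤ liminf f (𝓝[>] (0:ℝ)) := by
    have hcomp : Tendsto (fun h => φ (nn h)) (𝓝[>] (0:ℝ)) (𝓝 1) := hφ_tendsto.comp hnn_tendsto
    rw [← hcomp.liminf_eq]
    exact liminf_le_liminf key
  exact tendsto_of_le_liminf_of_limsup_le h1le (limsup_ratio_le_one S y)

/-- density transfers to an a.e.-superset -/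
lemma density_mono (S T : Set ℝ) (y : ℝ) (hST : volume (S \ T) = 0)
    (h : HasDensityOne S y) : HasDensityOne T y := by
  apply tendsto_of_le_liminf_of_limsup_le _ (limsup_ratio_le_one T y)
  have hmono : ∀ h' : ℝ,
      volume (S ∩ Icc (y - h') (y + h')) / ENNReal.ofReal (2 * h') ≤
        volume (T ∩ Icc (y - h') (y + h')) / ENNReal.ofReal (2 * h') := by
    intro h'
    apply ENNReal.div_le_div _ le_rfl
    calc volume (S ∩ Icc (y - h') (y + h'))
        ≤ volume ((T ∩ Icc (y - h') (y + h')) ∪ (S \ T)) := by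
          apply measure_mono; intro t ⟨htS, htI⟩
          by_cases htT : t ∈ T
          · exact Or.inl ⟨htT, htI⟩
          · exact Or.inr ⟨htS, htT⟩
      _ ≤ volume (T ∩ Icc (y - h') (y + h')) + volume (S \ T) := measure_union_le _ _
      _ = volume (T ∩ Icc (y - h') (y + h')) := by rw [hST, add_zero]
  calc (1:ℝ≥0∞) = liminf (fun h' : ℝ => volume (S ∩ Icc (y - h') (y + h')) /
        ENNReal.ofReal (2 * h')) (𝓝[>] 0) := h.liminf_eq.symm
    _ ≤ _ := liminf_le_liminf (Eventually.of_forall hmono)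

/-- Besicovitch density theorem, in the `HasDensityOne` form. -/
lemma ae_density_one (S : Set ℝ) (hS : MeasurableSet S) :
    ∀ᵐ y ∂(volume : Measure ℝ), y ∈ S → HasDensityOne S y := by
  filter_upwards [Besicovitch.ae_tendsto_measure_inter_div_of_measurableSet volume hS]
    with y hy hyS
  have hind : S.indicator (1 : ℝ → ℝ≥0∞) y = 1 := by simp [indicator_of_mem hyS]
  rw [hind] at hy
  have heq : (fun h : ℝ => volume (S ∩ Icc (y - h) (y + h)) / ENNReal.ofReal (2 * h)) =
      fun r => volume (S ∩ Metric.closedBall y r) / volume (Metric.closedBall y r) := by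
    funext r
    rw [Real.closedBall_eq_Icc, Real.volume_Icc]
    ring_nf
  rw [HasDensityOne, heq]
  exact hy

/-- ratio function for sections -/
noncomputable def Phi (g' : ℝ × ℝ → ℝ) (e : ℚ × ℚ) (n : ℕ) (p : ℝ × ℝ) : ℝ≥0∞ :=
  volume (Prod.mk p.1 ⁻¹' (g' ⁻¹' (Ioo (e.1 : ℝ) (e.2 : ℝ))) ∩
    Icc (p.2 - useq n) (p.2 + useq n)) / ENNReal.ofReal (2 * useq n)

lemma Phi_measurable {g' : ℝ × ℝ → ℝ} (hg' : Measurable g') (e : ℚ × ℚ) (n : ℕ) :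
    Measurable (Phi g' e n) := by
  set s : Set ((ℝ × ℝ) × ℝ) :=
    {q | (q.1.1, q.2) ∈ g' ⁻¹' (Ioo (e.1 : ℝ) (e.2 : ℝ))} ∩
      ({q | q.1.2 - useq n ≤ q.2} ∩ {q | q.2 ≤ q.1.2 + useq n}) with hs
  have hsm : MeasurableSet s := by
    apply MeasurableSet.inter
    · exact (hg' measurableSet_Ioo).preimage ((measurable_fst.fst).prodMk measurable_snd)
    · exact ((measurableSet_le ((measurable_fst.snd).sub measurable_const) measurable_snd)).inter
        (measurableSet_le measurable_snd ((measurable_fst.snd).add measurable_const))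
  have hkey : Measurable fun p : ℝ × ℝ => volume (Prod.mk p ⁻¹' s) :=
    measurable_measure_prodMk_left hsm
  have heq : ∀ p : ℝ × ℝ, Prod.mk p ⁻¹' s =
      Prod.mk p.1 ⁻¹' (g' ⁻¹' (Ioo (e.1 : ℝ) (e.2 : ℝ))) ∩ Icc (p.2 - useq n) (p.2 + useq n) := by
    intro p; ext t
    simp [hs, mem_Icc, and_assoc]
  have : Phi g' e n = fun p => volume (Prod.mk p ⁻¹' s) / ENNReal.ofReal (2 * useq n) := by
    funext p; rw [Phi, heq p]
  rw [this]
  exact hkey.div measurable_const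

lemma Gset_measurable {g' : ℝ × ℝ → ℝ} (hg' : Measurable g') (e : ℚ × ℚ) :
    MeasurableSet {p : ℝ × ℝ | Tendsto (fun n => Phi g' e n p) atTop (𝓝 1)} := by
  have heq : {p : ℝ × ℝ | Tendsto (fun n => Phi g' e n p) atTop (𝓝 1)} =
      {p | liminf (fun n => Phi g' e n p) atTop = 1} ∩
        {p | limsup (fun n => Phi g' e n p) atTop = 1} := by
    ext p
    constructor
    · intro hp; exact ⟨hp.liminf_eq, hp.limsup_eq⟩
    · rintro ⟨h1, h2⟩; exact tendsto_of_liminf_eq_limsup h1 h2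
  rw [heq]
  exact ((Measurable.liminf fun n => Phi_measurable hg' e n) (measurableSet_singleton 1)).inter
    ((Measurable.limsup fun n => Phi_measurable hg' e n) (measurableSet_singleton 1))

/-- If `g : ℝ² → ℝ` is Lebesgue measurable then off a planar null set `B`
every vertical section `g_x` is approximately continuous at `y`. -/
theorem approx_continuous_sections_ae (g : ℝ × ℝ → ℝ)
    (hg : AEMeasurable g (volume : Measure (ℝ × ℝ))) :
    ∃ B : Set (ℝ × ℝ), volume B = 0 ∧
      ∀ p : ℝ × ℝ, p ∉ B → ApproxContinuousAt (fun y => g (p.1, y)) p.2 := by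
  classical
  set g' : ℝ × ℝ → ℝ := hg.mk g with hg'def
  have hg'meas : Measurable g' := hg.measurable_mk
  have hgg' : ∀ᵐ p ∂(volume : Measure (ℝ × ℝ)), g p = g' p := hg.ae_eq_mk
  -- the planar null set where g ≠ g'
  set N : Set (ℝ × ℝ) := toMeasurable (volume : Measure (ℝ × ℝ)) {p | g p ≠ g' p} with hN
  have hNmeas : MeasurableSet N := measurableSet_toMeasurable _ _
  have hN0 : volume N = 0 := by
    rw [hN, measure_toMeasurable]
    exact hgg'
  -- the bad set of first coordinates
  set Xb : Set ℝ := toMeasurable (volume : Measure ℝ)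
    {x : ℝ | volume (Prod.mk x ⁻¹' N) ≠ 0} with hXb
  have hXb0 : volume Xb = 0 := by
    rw [hXb, measure_toMeasurable]
    have h1 : (fun x => volume (Prod.mk x ⁻¹' N)) =ᵐ[volume] 0 := by
      apply (Measure.measure_prod_null hNmeas).1
      rw [← Measure.volume_eq_prod ℝ ℝ]
      exact hN0
    simpa [EventuallyEq, ae_iff] using h1
  -- basic preimages and bad density sets
  set A : ℚ × ℚ → Set (ℝ × ℝ) := fun e => g' ⁻¹' (Ioo (e.1 : ℝ) (e.2 : ℝ)) with hA
  have hAmeas : ∀ e, MeasurableSet (A e) := fun e => hg'meas measurableSet_Ioo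
  set G : ℚ × ℚ → Set (ℝ × ℝ) :=
    fun e => {p | Tendsto (fun n => Phi g' e n p) atTop (𝓝 1)} with hG
  set D : ℚ × ℚ → Set (ℝ × ℝ) := fun e => A e ∩ (G e)ᶜ with hD
  have hDmeas : ∀ e, MeasurableSet (D e) :=
    fun e => (hAmeas e).inter (Gset_measurable hg'meas e).compl
  have hD0 : ∀ e, volume (D e) = 0 := by
    intro e
    rw [Measure.volume_eq_prod ℝ ℝ]
    rw [Measure.measure_prod_null (hDmeas e)]
    refine Eventually.of_forall fun x => ?_
    have hSm : MeasurableSet (Prod.mk x ⁻¹' A e) := (hAmeas e).preimage measurable_prodMk_left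
    have hae := ae_density_one _ hSm
    rw [ae_iff] at hae
    have hsub : Prod.mk x ⁻¹' D e ⊆
        {y | ¬ (y ∈ Prod.mk x ⁻¹' A e → HasDensityOne (Prod.mk x ⁻¹' A e) y)} := by
      rintro y ⟨hyA, hyG⟩
      intro himp
      exact hyG ((himp hyA).comp useq_tendsto)
    exact measure_mono_null hsub hae
  -- the total bad set
  refine ⟨N ∪ (Xb ×ˢ (univ : Set ℝ)) ∪ ⋃ e : ℚ × ℚ, D e, ?_, ?_⟩
  · apply measure_union_null (measure_union_null hN0 ?_) (measure_iUnion_null fun e => hD0 e)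
    rw [Measure.volume_eq_prod ℝ ℝ, Measure.prod_prod]
    simp [hXb0]
  · rintro p hp U hUopen hUmem
    have hpN : p ∉ N := fun h => hp (Or.inl (Or.inl h))
    have hpX : p.1 ∉ Xb := fun h => hp (Or.inl (Or.inr ⟨h, mem_univ _⟩))
    have hpD : ∀ e, p ∉ D e := fun e h => hp (Or.inr (mem_iUnion.2 ⟨e, h⟩))
    have hgp : g p = g' p := by
      by_contra h
      exact hpN (subset_toMeasurable _ _ h)
    have hsec0 : volume {t | ¬ g (p.1, t) = g' (p.1, t)} = 0 := by
      have hsub : {t | ¬ g (p.1, t) = g' (p.1, t)} ⊆ Prod.mk p.1 ⁻¹' N :=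
        fun t ht => subset_toMeasurable _ _ ht
      apply measure_mono_null hsub
      by_contra h
      exact hpX (subset_toMeasurable _ _ h)
    have haesec : ∀ᵐ t ∂(volume : Measure ℝ), g (p.1, t) = g' (p.1, t) := by
      rw [ae_iff]; exact hsec0
    have hg'x : Measurable (fun t => g' (p.1, t)) := hg'meas.comp measurable_prodMk_left
    have hUmem' : g p ∈ U := by simpa using hUmem
    constructor
    · -- null measurability
      have hT' : MeasurableSet ((fun t => g' (p.1, t)) ⁻¹' U) := hg'x hUopen.measurableSet
      apply hT'.nullMeasurableSet.congr
      filter_upwards [haesec] with t ht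
      show (g' (p.1, t) ∈ U) = (g (p.1, t) ∈ U)
      rw [ht]
    · -- density one
      obtain ⟨ε, hε, hball⟩ := Metric.isOpen_iff.1 hUopen _ hUmem'
      obtain ⟨q, hq1, hq2⟩ := exists_rat_btwn (show g p - ε < g p by linarith)
      obtain ⟨r, hr1, hr2⟩ := exists_rat_btwn (show g p < g p + ε by linarith)
      have hIooU : Ioo (q : ℝ) (r : ℝ) ⊆ U := by
        rintro t ⟨h1, h2⟩
        apply hball
        rw [Metric.mem_ball, Real.dist_eq, abs_lt]
        constructor <;> linarith
      set e : ℚ × ℚ := (q, r) with he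
      have hpA : p ∈ A e := by
        show g' p ∈ Ioo (q : ℝ) (r : ℝ)
        rw [← hgp]
        exact ⟨hq2, hr1⟩
      have hpG : p ∈ G e := by
        by_contra h
        exact hpD e ⟨hpA, h⟩
      have hdoS : HasDensityOne (Prod.mk p.1 ⁻¹' A e) p.2 := seq_to_density _ _ hpG
      apply density_mono (Prod.mk p.1 ⁻¹' A e) _ p.2 _ hdoS
      apply measure_mono_null _ hsec0
      rintro t ⟨htS, htT⟩
      intro heqc
      apply htT
      show g (p.1, t) ∈ U
      rw [heqc]
      exact hIooU htS
end
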